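/- The additive group of the free associative ring ℤ⟨X⟩ on X = {x1, x2, ...} is the direct sum of the subgroups x_{i1} x_{i2} ··· x_{is} Γ over all s ≥ 0 and all weakly increasing index sequences i1 ≤ i2 ≤ ... ≤ is, where Γ is the unital subring generated by all left-normed commutators of the generators. -/

import Mathlib

/-- Commutator `[a,b] = a*b - b*a`. -/
def br {R : Type*} [Ring R] (a b : R) : R := a * b - b * a

/-- The free unital associative ring `ℤ⟨X⟩` on countably many generators. -/
abbrev FreeRing' : Type := FreeAlgebra ℤ ℕ

/-- The generator `x_i`. -/
noncomputable def x (i : ℕ) : FreeRing' := FreeAlgebra.ι ℤ i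

/-- The unital subring `Γ` of `ℤ⟨X⟩` generated by all left-normed commutators
`[x_{i1}, ..., x_{il}]` of the free generators, of length `l ≥ 2`. -/
noncomputable def Gamma : Subring FreeRing' :=
  Subring.closure
    {g | ∃ (i j : ℕ) (rest : List ℕ),
      g = rest.foldl (fun acc m => br acc (x m)) (br (x i) (x j))}

/-- For a weakly increasing list `w = [i1, ..., is]`, the additive subgroup
`x_{i1} x_{i2} ⋯ x_{is} · Γ` of `ℤ⟨X⟩`. -/
noncomputable def monomialGamma (w : List ℕ) : AddSubgroup FreeRing' :=
  AddSubgroup.map (AddMonoidHom.mulLeft ((w.map x).prod)) Gamma.toAddSubgroup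

noncomputable section

namespace FRDS

/-- index type of the decomposition -/
abbrev W : Type := {l : List ℕ // l.Pairwise (· ≤ ·)}

/-- the monomial `x_{i1} ⋯ x_{is}` attached to a word. -/
def xprod (w : List ℕ) : FreeRing' := (w.map x).prod

/-- left-normed commutators. -/
def comm (i j : ℕ) (rest : List ℕ) : FreeRing' :=
  rest.foldl (fun acc m => br acc (x m)) (br (x i) (x j))

lemma xprod_nil : xprod [] = 1 := rfl

lemma xprod_cons (i : ℕ) (l : List ℕ) : xprod (i :: l) = x i * xprod l := by
  simp [xprod]

lemma xprod_append (l₁ l₂ : List ℕ) : xprod (l₁ ++ l₂) = xprod l₁ * xprod l₂ := by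
  simp [xprod]

lemma comm_mem (i j : ℕ) (rest : List ℕ) : comm i j rest ∈ Gamma :=
  Subring.subset_closure ⟨i, j, rest, rfl⟩

lemma comm_snoc (i j m : ℕ) (rest : List ℕ) :
    comm i j (rest ++ [m]) = br (comm i j rest) (x m) := by
  simp [comm, List.foldl_append]

lemma mem_monomialGamma {w : List ℕ} {γ : FreeRing'} (hγ : γ ∈ Gamma) :
    xprod w * γ ∈ monomialGamma w :=
  ⟨γ, hγ, rfl⟩

/-- The sum of all the subgroups of the decomposition. -/
def T : AddSubgroup FreeRing' := ⨆ w : W, monomialGamma w.1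

lemma sorted_mem_T {u : List ℕ} (hu : u.Pairwise (· ≤ ·)) {γ : FreeRing'} (hγ : γ ∈ Gamma) :
    xprod u * γ ∈ T :=
  (le_iSup (fun w : W => monomialGamma w.1) ⟨u, hu⟩) (mem_monomialGamma hγ)

/-! ### Inversion counting -/

/-- number of inversions of a list -/
def inv : List ℕ → ℕ
  | [] => 0
  | a :: l => l.countP (fun b => decide (b < a)) + inv l

lemma countP_swap (c a b : ℕ) (p s : List ℕ) :
    (p ++ a :: b :: s).countP (fun y => decide (y < c))
      = (p ++ b :: a :: s).countP (fun y => decide (y < c)) := by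
  simp only [List.countP_append, List.countP_cons]
  omega

lemma inv_swap (a b : ℕ) (hab : a < b) : ∀ (p s : List ℕ),
    inv (p ++ a :: b :: s) < inv (p ++ b :: a :: s) := by
  intro p
  induction p with
  | nil =>
    intro s
    have h1 : ¬ (b < a) := not_lt.mpr hab.le
    simp [inv, List.countP_cons, h1, hab]
    omega
  | cons c p ih =>
    intro s
    have := ih s
    simp only [List.cons_append, inv, List.append_eq, List.countP_append, List.countP_cons]
    omega

lemma exists_descent : ∀ (u : List ℕ), u.Pairwise (· ≤ ·) ∨
    ∃ p a b s, a < b ∧ u = p ++ b :: a :: s := by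
  intro u
  induction u with
  | nil => exact Or.inl List.Pairwise.nil
  | cons c t ih =>
    cases t with
    | nil => exact Or.inl (List.pairwise_singleton _ c)
    | cons d t' =>
      rcases le_or_gt c d with h | h
      · rcases ih with hs | ⟨p, a, b, s, hab, heq⟩
        · left
          rw [List.pairwise_cons]
          refine ⟨?_, hs⟩
          intro e he
          rcases List.mem_cons.1 he with rfl | he'
          · exact h
          · exact h.trans ((List.pairwise_cons.1 hs).1 e he')
        · right
          exact ⟨c :: p, a, b, s, hab, by rw [heq]; rfl⟩
      · exact Or.inr ⟨[], d, c, t', h, rfl⟩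

/-! ### Spanning -/

lemma spanN (n : ℕ)
    (ihn : ∀ u γ, γ ∈ Gamma → u.length ≤ n → xprod u * γ ∈ T) :
    ∀ (s p : List ℕ) (i j : ℕ) (rest : List ℕ) (γ : FreeRing'), γ ∈ Gamma →
      p.length + s.length + 1 ≤ n → xprod p * (comm i j rest * (xprod s * γ)) ∈ T := by
  intro s
  induction s with
  | nil =>
    intro p i j rest γ hγ hlen
    have h1 : xprod p * (comm i j rest * (xprod [] * γ)) = xprod p * (comm i j rest * γ) := by
      rw [xprod_nil, one_mul]
    rw [h1]
    exact ihn p _ (Gamma.mul_mem (comm_mem i j rest) hγ) (by omega)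
  | cons m s' ih =>
    intro p i j rest γ hγ hlen
    have key : xprod p * (comm i j rest * (xprod (m :: s') * γ))
        = xprod (p ++ [m]) * (comm i j rest * (xprod s' * γ))
          + xprod p * (comm i j (rest ++ [m]) * (xprod s' * γ)) := by
      simp only [comm_snoc, xprod_append, xprod_cons, xprod_nil, mul_one, br]
      noncomm_ring
    rw [key]
    have hl1 : (p ++ [m]).length + s'.length + 1 ≤ n := by
      simp only [List.length_append, List.length_cons, List.length_nil] at hlen ⊢
      omega
    have hl2 : p.length + s'.length + 1 ≤ n := by
      simp only [List.length_cons] at hlen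
      omega
    exact add_mem (ih (p ++ [m]) i j rest γ hγ hl1) (ih p i j (rest ++ [m]) γ hγ hl2)

lemma spanM : ∀ (n : ℕ) (u : List ℕ) (γ : FreeRing'), γ ∈ Gamma → u.length ≤ n →
    xprod u * γ ∈ T := by
  intro n
  induction n with
  | zero =>
    intro u γ hγ hlen
    have hu : u = [] := List.length_eq_zero_iff.1 (Nat.le_zero.1 hlen)
    subst hu
    exact sorted_mem_T List.Pairwise.nil hγ
  | succ n ihn =>
    suffices H : ∀ (k : ℕ) (u : List ℕ) (γ : FreeRing'), γ ∈ Gamma → u.length ≤ n + 1 →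
        inv u ≤ k → xprod u * γ ∈ T by
      intro u γ hγ hlen
      exact H (inv u) u γ hγ hlen le_rfl
    intro k
    induction k with
    | zero =>
      intro u γ hγ hlen hinv
      rcases exists_descent u with hs | ⟨p, a, b, s, hab, rfl⟩
      · exact sorted_mem_T hs hγ
      · exact absurd (inv_swap a b hab p s) (by omega)
    | succ k ihk =>
      intro u γ hγ hlen hinv
      rcases exists_descent u with hs | ⟨p, a, b, s, hab, rfl⟩
      · exact sorted_mem_T hs hγ
      · have key : xprod (p ++ b :: a :: s) * γ
            = xprod (p ++ a :: b :: s) * γ - xprod p * (comm a b [] * (xprod s * γ)) := by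
          simp only [xprod_append, xprod_cons, comm, List.foldl_nil, br]
          noncomm_ring
        rw [key]
        have hlen' : (p ++ a :: b :: s).length ≤ n + 1 := by
          simpa [List.length_append] using hlen
        have hinv' : inv (p ++ a :: b :: s) ≤ k := by
          have := inv_swap a b hab p s
          omega
        have hlen'' : p.length + s.length + 1 ≤ n := by
          simp only [List.length_append, List.length_cons] at hlen
          omega
        exact sub_mem (ihk _ γ hγ hlen' hinv') (spanN n ihn s p a b [] γ hγ hlen'')

lemma xprod_mem_T (u : List ℕ) : xprod u ∈ T := by
  have := spanM u.length u 1 Gamma.one_mem le_rfl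
  rwa [mul_one] at this

lemma mem_closure_monomials (a : FreeRing') :
    a ∈ AddSubgroup.closure (Set.range xprod) := by
  set B := AddSubgroup.closure (Set.range xprod) with hB
  have hmono : ∀ u : List ℕ, xprod u ∈ B := fun u => AddSubgroup.subset_closure ⟨u, rfl⟩
  have h2 : ∀ (u : List ℕ) (b : FreeRing'), b ∈ B → xprod u * b ∈ B := by
    intro u b hb
    induction hb using AddSubgroup.closure_induction with
    | mem y hy =>
      obtain ⟨v, rfl⟩ := hy
      rw [← xprod_append]
      exact hmono _
    | zero => rw [mul_zero]; exact zero_mem B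
    | add y z _ _ hy hz => rw [mul_add]; exact add_mem hy hz
    | neg y _ hy => rw [mul_neg]; exact neg_mem hy
  have hmul : ∀ a : FreeRing', a ∈ B → ∀ b : FreeRing', b ∈ B → a * b ∈ B := by
    intro a ha
    induction ha using AddSubgroup.closure_induction with
    | mem y hy =>
      obtain ⟨v, rfl⟩ := hy
      exact fun b hb => h2 v b hb
    | zero => intro b _; rw [zero_mul]; exact zero_mem B
    | add y z _ _ hy hz => intro b hb; rw [add_mul]; exact add_mem (hy b hb) (hz b hb)
    | neg y _ hy => intro b hb; rw [neg_mul]; exact neg_mem (hy b hb)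
  have h1 : a ∈ Algebra.adjoin ℤ (Set.range (FreeAlgebra.ι ℤ : ℕ → FreeRing')) := by
    rw [FreeAlgebra.adjoin_range_ι]
    trivial
  rw [Algebra.mem_adjoin_iff] at h1
  induction h1 using Subring.closure_induction with
  | mem y hy =>
    rcases hy with ⟨n, rfl⟩ | ⟨i, rfl⟩
    · have : (algebraMap ℤ FreeRing') n = n • (1 : FreeRing') := by
        rw [zsmul_eq_mul, mul_one]
        simp [Algebra.algebraMap_eq_smul_one, zsmul_eq_mul]
      rw [this]
      exact zsmul_mem (by simpa [xprod_nil] using hmono []) n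
    · have : FreeAlgebra.ι ℤ i = xprod [i] := by rw [xprod_cons, xprod_nil, mul_one]; rfl
      rw [this]
      exact hmono [i]
  | zero => exact zero_mem B
  | one => simpa [xprod_nil] using hmono []
  | add y z _ _ hy hz => exact add_mem hy hz
  | neg y _ hy => exact neg_mem hy
  | mul y z hy' hz' hy hz => exact hmul y hy z hz

lemma mem_T (a : FreeRing') : a ∈ T := by
  have h := mem_closure_monomials a
  induction h using AddSubgroup.closure_induction with
  | mem y hy => obtain ⟨u, rfl⟩ := hy; exact xprod_mem_T u
  | zero => exact zero_mem T
  | add y z _ _ hy hz => exact add_mem hy hz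
  | neg y _ hy => exact neg_mem hy


/-! ### The homomorphism `Φ` and independence -/

abbrev P' : Type := AddMonoidAlgebra FreeRing' (ℕ →₀ ℕ)

/-- constants -/
def Cc (a : FreeRing') : P' := AddMonoidAlgebra.single 0 a

/-- central monomials -/
def XX (d : ℕ →₀ ℕ) : P' := AddMonoidAlgebra.single d 1

/-- The "coproduct-like" homomorphism recording commuting copies of the variables. -/
def Φ : FreeRing' →ₐ[ℤ] P' :=
  FreeAlgebra.lift ℤ fun i => XX (Finsupp.single i 1) + Cc (x i)

lemma Phi_x (i : ℕ) : Φ (x i) = XX (Finsupp.single i 1) + Cc (x i) := by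
  simp [Φ, x]

lemma single_mul (d e : ℕ →₀ ℕ) (a b : FreeRing') :
    (AddMonoidAlgebra.single d a : P') * AddMonoidAlgebra.single e b
      = AddMonoidAlgebra.single (d + e) (a * b) := AddMonoidAlgebra.single_mul_single _ _ _ _

lemma br_single (d e : ℕ →₀ ℕ) (a b : FreeRing') :
    br (AddMonoidAlgebra.single d a : P') (AddMonoidAlgebra.single e b)
      = AddMonoidAlgebra.single (d + e) (br a b) := by
  have h : (AddMonoidAlgebra.single (d + e) (a * b) : P') - AddMonoidAlgebra.single (d + e) (b * a)
      = AddMonoidAlgebra.single (d + e) (a * b - b * a) := (AddMonoidAlgebra.single_sub _ _ _).symm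
  rw [br, br, single_mul, single_mul, add_comm e d, h]

lemma map_br (a b : FreeRing') : Φ (br a b) = br (Φ a) (Φ b) := by
  simp [br, map_mul, map_sub]

lemma br_add_right (u v w : P') : br u (v + w) = br u v + br u w := by
  simp only [br]
  noncomm_ring

lemma br_add_left (u v w : P') : br (u + v) w = br u w + br v w := by
  simp only [br]
  noncomm_ring

lemma Phi_br_x {a : FreeRing'} (ha : Φ a = Cc a) (m : ℕ) :
    Φ (br a (x m)) = Cc (br a (x m)) := by
  rw [map_br, ha, Phi_x, br_add_right]
  simp only [Cc, XX]
  rw [br_single, br_single]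
  have h1 : br a (1 : FreeRing') = 0 := by simp [br]
  rw [h1]
  have h2 : (AddMonoidAlgebra.single ((0 : ℕ →₀ ℕ) + Finsupp.single m 1) (0 : FreeRing') : P') = 0 :=
    AddMonoidAlgebra.single_zero _
  rw [h2]
  simp only [zero_add]

lemma Phi_comm (i j : ℕ) (rest : List ℕ) : Φ (comm i j rest) = Cc (comm i j rest) := by
  induction rest using List.reverseRecOn with
  | nil =>
    have h : comm i j [] = br (x i) (x j) := rfl
    rw [h, map_br, Phi_x, Phi_x, br_add_left, br_add_right, br_add_right]
    simp only [Cc, XX]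
    rw [br_single, br_single, br_single, br_single]
    have h1 : br (1 : FreeRing') 1 = 0 := by simp [br]
    have h2 : br (1 : FreeRing') (x j) = 0 := by simp [br]
    have h3 : br (x i) (1 : FreeRing') = 0 := by simp [br]
    rw [h1, h2, h3]
    have z1 : (AddMonoidAlgebra.single (Finsupp.single i 1 + Finsupp.single j 1) (0 : FreeRing') : P') = 0 :=
      AddMonoidAlgebra.single_zero _
    have z2 : (AddMonoidAlgebra.single (Finsupp.single i 1 + 0) (0 : FreeRing') : P') = 0 :=
      AddMonoidAlgebra.single_zero _
    have z3 : (AddMonoidAlgebra.single ((0 : ℕ →₀ ℕ) + Finsupp.single j 1) (0 : FreeRing') : P') = 0 :=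
      AddMonoidAlgebra.single_zero _
    rw [z1, z2, z3]
    simp only [zero_add, add_zero]
  | append_singleton rest m ih =>
    rw [comm_snoc]
    exact Phi_br_x ih m

lemma Phi_gamma {γ : FreeRing'} (hγ : γ ∈ Gamma) : Φ γ = Cc γ := by
  induction hγ using Subring.closure_induction with
  | mem g hg =>
    obtain ⟨i, j, rest, rfl⟩ := hg
    exact Phi_comm i j rest
  | zero => simp [Cc]
  | one =>
    rw [map_one]
    simp only [Cc]
    exact AddMonoidAlgebra.one_def
  | add a b _ _ ha hb =>
    rw [map_add, ha, hb]
    simp only [Cc]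
    exact (AddMonoidAlgebra.single_add 0 a b).symm
  | neg a _ ha =>
    rw [map_neg, ha]
    simp only [Cc]
    exact (AddMonoidAlgebra.single_neg 0 a).symm
  | mul a b _ _ ha hb =>
    rw [map_mul, ha, hb]
    simp only [Cc]
    rw [single_mul, zero_add]

/-! ### coefficient extraction -/

lemma Cc_mul_apply (r : FreeRing') (f : P') (d : ℕ →₀ ℕ) :
    (Cc r * f).coeff d = r * f.coeff d :=
  AddMonoidAlgebra.coeff_single_zero_mul f r d

lemma XX_mul_apply_le (f : P') {d e : ℕ →₀ ℕ} (h : e ≤ d) :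
    (XX e * f).coeff d = f.coeff (d - e) := by
  have := AddMonoidAlgebra.coeff_single_mul_eq_mul_coeff (x := f) (r := (1 : FreeRing')) (m := e) (m₁ := d) (d - e) ?_
  · simpa [XX] using this
  · intro a _
    constructor
    · rintro rfl
      rw [add_tsub_cancel_left]
    · rintro rfl
      exact add_tsub_cancel_of_le h

lemma XX_mul_apply_not_le (f : P') {d e : ℕ →₀ ℕ} (h : ¬ e ≤ d) :
    (XX e * f).coeff d = 0 := by
  apply AddMonoidAlgebra.coeff_single_mul_of_forall_add_ne
  rintro c rfl
  exact h le_self_add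

/-- the multidegree of a word -/
def D (w : List ℕ) : ℕ →₀ ℕ := Multiset.toFinsupp (↑w : Multiset ℕ)

lemma D_nil : D [] = 0 := Multiset.toFinsupp_zero

lemma D_cons (i : ℕ) (t : List ℕ) : D (i :: t) = Finsupp.single i 1 + D t := by
  rw [D, D, ← Multiset.cons_coe, ← Multiset.singleton_add, Multiset.toFinsupp_add,
    Multiset.toFinsupp_singleton]

lemma D_inj {w w' : List ℕ} (hw : w.Pairwise (· ≤ ·)) (hw' : w'.Pairwise (· ≤ ·))
    (h : D w = D w') : w = w' := by
  have h2 : (↑w : Multiset ℕ) = ↑w' := Multiset.toFinsupp.injective h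
  exact List.Perm.eq_of_pairwise' hw hw' (Multiset.coe_eq_coe.1 h2)

lemma not_add_le_self {e : ℕ →₀ ℕ} (he : e ≠ 0) (d : ℕ →₀ ℕ) : ¬ (e + d ≤ d) := by
  intro h
  exact he (nonpos_iff_eq_zero.1 ((add_le_iff_nonpos_left).1 h))

lemma coeff_zero_of_not_le :
    ∀ (w : List ℕ) (γ : FreeRing'), γ ∈ Gamma → ∀ d : ℕ →₀ ℕ, ¬ d ≤ D w →
      (Φ (xprod w * γ)).coeff d = 0 := by
  intro w
  induction w with
  | nil =>
    intro γ hγ d hd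
    rw [xprod_nil, one_mul, Phi_gamma hγ, Cc]
    rw [D_nil] at hd
    exact Finsupp.single_eq_of_ne fun h => hd (h ▸ le_rfl)
  | cons i t ih =>
    intro γ hγ d hd
    rw [D_cons] at hd
    rw [xprod_cons, mul_assoc, map_mul, Phi_x, add_mul, AddMonoidAlgebra.coeff_add, Finsupp.add_apply]
    have h1 : (XX (Finsupp.single i 1) * Φ (xprod t * γ)).coeff d = 0 := by
      by_cases he : Finsupp.single i 1 ≤ d
      · rw [XX_mul_apply_le _ he]
        apply ih γ hγ
        intro hle
        apply hd
        calc d = Finsupp.single i 1 + (d - Finsupp.single i 1) := (add_tsub_cancel_of_le he).symm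
          _ ≤ Finsupp.single i 1 + D t := add_le_add_right hle _
      · exact XX_mul_apply_not_le _ he
    have h2 : (Cc (x i) * Φ (xprod t * γ)).coeff d = 0 := by
      rw [Cc_mul_apply]
      have : (Φ (xprod t * γ)).coeff d = 0 := by
        apply ih γ hγ
        intro hle
        exact hd (hle.trans le_add_self)
      rw [this, mul_zero]
    rw [h1, h2, add_zero]

lemma coeff_top :
    ∀ (w : List ℕ) (γ : FreeRing'), γ ∈ Gamma → (Φ (xprod w * γ)).coeff (D w) = γ := by
  intro w
  induction w with
  | nil =>
    intro γ hγ
    rw [xprod_nil, one_mul, Phi_gamma hγ, D_nil, Cc]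
    exact Finsupp.single_eq_same
  | cons i t ih =>
    intro γ hγ
    rw [xprod_cons, mul_assoc, map_mul, Phi_x, add_mul, AddMonoidAlgebra.coeff_add, Finsupp.add_apply, D_cons]
    have hsingle : (Finsupp.single i 1 : ℕ →₀ ℕ) ≠ 0 := by
      simp [Finsupp.single_eq_zero]
    have h1 : (XX (Finsupp.single i 1) * Φ (xprod t * γ)).coeff (Finsupp.single i 1 + D t) = γ := by
      rw [XX_mul_apply_le _ le_self_add, add_tsub_cancel_left]
      exact ih γ hγ
    have h2 : (Cc (x i) * Φ (xprod t * γ)).coeff (Finsupp.single i 1 + D t) = 0 := by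
      rw [Cc_mul_apply, coeff_zero_of_not_le t γ hγ _ (not_add_le_self hsingle (D t)), mul_zero]
    rw [h1, h2, add_zero]

/-! ### independence of the family -/

lemma mem_monomialGamma_iff {w : List ℕ} {a : FreeRing'} :
    a ∈ monomialGamma w ↔ ∃ γ ∈ Gamma, xprod w * γ = a := by
  constructor
  · rintro ⟨γ, hγ, rfl⟩
    exact ⟨γ, hγ, rfl⟩
  · rintro ⟨γ, hγ, rfl⟩
    exact ⟨γ, hγ, rfl⟩

lemma indep_finset : ∀ (s : Finset W) (g : W → FreeRing'),
    (∀ w ∈ s, g w ∈ monomialGamma w.1) → (∑ w ∈ s, g w) = 0 → ∀ w ∈ s, g w = 0 := by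
  intro s
  induction s using Finset.strongInduction with
  | _ s ihs =>
    intro g hg hsum
    rcases Finset.eq_empty_or_nonempty s with rfl | hs
    · intro w hw
      exact absurd hw (Finset.notMem_empty w)
    · obtain ⟨w₀, hw₀s, hmax⟩ :=
        Set.Finite.exists_maximalFor (fun w : W => D w.1) (↑s : Set W) s.finite_toSet
          (by exact_mod_cast hs)
      choose γ hγmem hγeq using fun (w : W) (hw : w ∈ s) => mem_monomialGamma_iff.1 (hg w hw)
      -- evaluate the coefficient of `D w₀` of `Φ` applied to the relation
      have hcoeff : ∀ w (hw : w ∈ s), w ≠ w₀ → (Φ (g w)).coeff (D w₀.1) = 0 := by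
        intro w hw hne
        rw [← hγeq w hw]
        apply coeff_zero_of_not_le _ _ (hγmem w hw)
        intro hle
        have heq : D w₀.1 = D w.1 := le_antisymm hle (hmax (by exact_mod_cast hw) hle)
        exact hne (Subtype.ext (D_inj w₀.2 w.2 heq)).symm
      have hzero : (Φ (∑ w ∈ s, g w)).coeff (D w₀.1) = 0 := by
        rw [hsum, map_zero]
        rfl
      rw [map_sum] at hzero
      have happ : (∑ w ∈ s, Φ (g w)).coeff (D w₀.1) = ∑ w ∈ s, (Φ (g w)).coeff (D w₀.1) := by
        rw [AddMonoidAlgebra.coeff_sum, Finset.sum_apply']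
      rw [happ] at hzero
      rw [Finset.sum_eq_single_of_mem w₀ hw₀s (fun w hw hne => hcoeff w hw hne)] at hzero
      rw [← hγeq w₀ hw₀s, coeff_top _ _ (hγmem w₀ hw₀s)] at hzero
      have hg0 : g w₀ = 0 := by
        rw [← hγeq w₀ hw₀s, hzero, mul_zero]
      have herase : ∀ w ∈ s.erase w₀, g w = 0 := by
        apply ihs (s.erase w₀) (Finset.erase_ssubset hw₀s) g
          (fun w hw => hg w (Finset.mem_of_mem_erase hw))
        rw [Finset.sum_erase s hg0]
        exact hsum
      intro w hw
      rcases eq_or_ne w w₀ with rfl | hne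
      · exact hg0
      · exact herase w (Finset.mem_erase.2 ⟨hne, hw⟩)

lemma T_le {H : AddSubgroup FreeRing'} (h : ∀ w : W, monomialGamma w.1 ≤ H) : T ≤ H :=
  iSup_le h

end FRDS

end

/-- The additive group of `ℤ⟨X⟩` is the internal direct sum of the subgroups
`x_{i1} ⋯ x_{is} Γ` over all weakly increasing index sequences (including the
empty one, whose summand is `Γ` itself). -/
theorem free_ring_direct_sum_decomposition :
    DirectSum.IsInternal
      (fun w : {l : List ℕ // l.Pairwise (· ≤ ·)} => monomialGamma w.1) := by
  classical
  constructor
  · -- injectivity: via the coefficients of `Φ`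
    rw [injective_iff_map_eq_zero]
    intro f hf
    have hcoe : DirectSum.coeAddMonoidHom (fun w : FRDS.W => monomialGamma w.1) f
        = ∑ w ∈ f.support, ((f w : FreeRing')) := by
      rw [DirectSum.coeAddMonoidHom_eq_dfinsuppSum]
      rfl
    have hzero := FRDS.indep_finset f.support (fun w => (f w : FreeRing'))
      (fun w _ => (f w).2) (by rw [← hcoe, hf])
    refine DFinsupp.ext fun w => ?_
    by_cases hw : w ∈ f.support
    · have h1 : ((f w : FreeRing')) = 0 := hzero w hw
      have h2 : f w = 0 := Subtype.ext h1
      rw [h2]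
      rfl
    · rw [DFinsupp.notMem_support_iff.1 hw]
      rfl
  · -- surjectivity: via the straightening / spanning argument
    intro a
    have hle : FRDS.T ≤ (DirectSum.coeAddMonoidHom (fun w : FRDS.W => monomialGamma w.1)).range := by
      apply FRDS.T_le
      intro w b hb
      exact ⟨DirectSum.of (fun w : FRDS.W => ↥(monomialGamma w.1)) w ⟨b, hb⟩,
        DirectSum.coeAddMonoidHom_of (fun w : FRDS.W => monomialGamma w.1) w ⟨b, hb⟩⟩
    obtain ⟨f, hf⟩ := hle (FRDS.mem_T a)
    exact ⟨f, hf⟩
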